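/- If V, P in C[z] are coprime, P is squarefree, and there exists R in C[z] with V R = 6 V'' P - 19 V' P' and P R = s^2 V + 10 P P'' - 25 (P')^2 for a nonzero constant s, and deg R < deg P, then 11 R + 190 P'' = 0 and 22 P P'''' + 45 (P'')^2 - 66 P' P''' = 0. -/

import Mathlib

open Polynomial

theorem elimination_yields_ODE (V P R : ℂ[X]) (s : ℂ) (hs : s ≠ 0)
    (hVP : IsCoprime V P) (hPsf : Squarefree P)
    (h1 : V * R = 6 * (derivative (derivative V)) * P - 19 * (derivative V) * (derivative P))
    (h2 : P * R = C (s^2) * V + 10 * P * (derivative (derivative P)) - 25 * (derivative P)^2)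
    (hdeg : R.degree < P.degree) :
    11 * R + 190 * (derivative (derivative P)) = 0 ∧
      22 * P * (derivative (derivative (derivative (derivative P)))) +
        45 * (derivative (derivative P))^2 -
          66 * (derivative P) * (derivative (derivative (derivative P))) = 0 := by
  have hP0 : P ≠ 0 := by
    rintro rfl
    simp only [degree_zero] at hdeg
    exact not_lt_bot hdeg
  have hsep : P.Separable := (PerfectField.separable_iff_squarefree).mpr hPsf
  -- first derivative of h2
  have hd1 : C (s^2) * derivative V =
      P * derivative R + derivative P * R + 40 * derivative P * derivative (derivative P)
        - 10 * P * derivative (derivative (derivative P)) := by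
    have h := congrArg derivative h2
    simp only [derivative_mul, derivative_add, derivative_sub, derivative_C,
      derivative_ofNat, derivative_pow, Nat.cast_ofNat, map_ofNat] at h
    linear_combination -h
  -- second derivative of h2
  have hd2 : C (s^2) * derivative (derivative V) =
      P * derivative (derivative R) + 2 * derivative P * derivative R
        + derivative (derivative P) * R
        + 40 * derivative (derivative P) * derivative (derivative P)
        + 30 * derivative P * derivative (derivative (derivative P))
        - 10 * P * derivative (derivative (derivative (derivative P))) := by
    have h := congrArg derivative hd1
    simp only [derivative_mul, derivative_add, derivative_sub, derivative_C,
      derivative_ofNat, derivative_pow, Nat.cast_ofNat, map_ofNat] at h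
    linear_combination h
  -- key elimination identity
  have hkey : (derivative P) ^ 2 * (44 * R + 760 * derivative (derivative P)) =
      P * (-(R^2) + 16 * derivative (derivative P) * R + 6 * P * derivative (derivative R)
        - 7 * derivative P * derivative R + 240 * (derivative (derivative P))^2
        + 370 * derivative P * derivative (derivative (derivative P))
        - 60 * P * derivative (derivative (derivative (derivative P)))) := by
    linear_combination (C (s^2)) * h1 + R * h2 + 6 * P * hd2 - 19 * derivative P * hd1
  have hdvd0 : P ∣ (derivative P) ^ 2 * (44 * R + 760 * derivative (derivative P)) :=
    Dvd.intro _ hkey.symm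
  have hdvd : P ∣ 44 * R + 760 * derivative (derivative P) :=
    (hsep.pow_right).dvd_of_dvd_mul_left hdvd0
  have hdegQ : (44 * R + 760 * derivative (derivative P)).degree < P.degree := by
    apply lt_of_le_of_lt (degree_add_le _ _)
    apply max_lt
    · calc (44 * R).degree ≤ (44 : ℂ[X]).degree + R.degree := degree_mul_le _ _
        _ ≤ 0 + R.degree := add_le_add_left (degree_le_zero_iff.mpr (by norm_num; exact (map_ofNat C 44).symm)) _
        _ = R.degree := by rw [zero_add]
        _ < P.degree := hdeg
    · calc (760 * derivative (derivative P)).degree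
          ≤ (760 : ℂ[X]).degree + (derivative (derivative P)).degree := degree_mul_le _ _
        _ ≤ 0 + (derivative (derivative P)).degree :=
            add_le_add_left (degree_le_zero_iff.mpr (by norm_num; exact (map_ofNat C 760).symm)) _
        _ = (derivative (derivative P)).degree := by rw [zero_add]
        _ ≤ (derivative P).degree := degree_derivative_le
        _ < P.degree := degree_derivative_lt hP0
  have hQ : 44 * R + 760 * derivative (derivative P) = 0 :=
    eq_zero_of_dvd_of_degree_lt hdvd hdegQ
  have hz : 11 * R + 190 * derivative (derivative P) = 0 := by
    have h4 : (4 : ℂ[X]) * (11 * R + 190 * derivative (derivative P)) = 0 := by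
      linear_combination hQ
    rcases mul_eq_zero.mp h4 with h | h
    · exact absurd h (by norm_num)
    · exact h
  have hz1 : 11 * derivative R + 190 * derivative (derivative (derivative P)) = 0 := by
    have h := congrArg derivative hz
    simp only [derivative_mul, derivative_add, derivative_ofNat, derivative_zero] at h
    linear_combination h
  have hz2 : 11 * derivative (derivative R)
      + 190 * derivative (derivative (derivative (derivative P))) = 0 := by
    have h := congrArg derivative hz1
    simp only [derivative_mul, derivative_add, derivative_ofNat, derivative_zero] at h
    linear_combination h
  have hE : -(R^2) + 16 * derivative (derivative P) * R + 6 * P * derivative (derivative R)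
      - 7 * derivative P * derivative R + 240 * (derivative (derivative P))^2
      + 370 * derivative P * derivative (derivative (derivative P))
      - 60 * P * derivative (derivative (derivative (derivative P))) = 0 := by
    have h0 : P * (-(R^2) + 16 * derivative (derivative P) * R
        + 6 * P * derivative (derivative R)
        - 7 * derivative P * derivative R + 240 * (derivative (derivative P))^2
        + 370 * derivative P * derivative (derivative (derivative P))
        - 60 * P * derivative (derivative (derivative (derivative P)))) = 0 := by
      rw [← hkey]
      linear_combination (derivative P) ^ 2 * 4 * hz
    rcases mul_eq_zero.mp h0 with h | h
    · exact absurd h hP0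
    · exact h
  refine ⟨hz, ?_⟩
  have h900 : (900 : ℂ[X]) * (22 * P * derivative (derivative (derivative (derivative P)))
      + 45 * (derivative (derivative P))^2
      - 66 * derivative P * derivative (derivative (derivative P))) = 0 := by
    linear_combination (-121 : ℂ[X]) * hE
      + (-11 * R + 366 * derivative (derivative P)) * hz
      - 77 * derivative P * hz1 + 66 * P * hz2
  rcases mul_eq_zero.mp h900 with h | h
  · exact absurd h (by norm_num)
  · exact h
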